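/- Let n ≥ 1 and let A, B, A₁, B₁ be skew-symmetric n×n complex matrices. If the pencils (A,B) and (A₁,B₁) are strictly equivalent, i.e. there exist invertible complex n×n matrices P and Q (with constant entries) such that P A Q = A₁ and P B Q = B₁, then the pencils are congruent: there exists an invertible complex n×n matrix S such that S A Sᵀ = A₁ and S B Sᵀ = B₁. -/

import Mathlib

open Matrix Polynomial

/-- For `l ≠ 0`, one can find a polynomial square root of `X` modulo `(X - C l)^e`. -/
private lemma sqrt_mod_pow (l : ℂ) (hl : l ≠ 0) (e : ℕ) :
    ∃ p : Polynomial ℂ, (X - C l) ^ e ∣ p ^ 2 - X := by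
  induction e with
  | zero => exact ⟨0, one_dvd _⟩
  | succ e ih =>
    rcases Nat.eq_zero_or_pos e with he | he
    · subst he
      obtain ⟨c, hc⟩ := IsAlgClosed.exists_pow_nat_eq l zero_lt_two
      refine ⟨C c, ⟨-1, ?_⟩⟩
      rw [pow_one]
      rw [← map_pow, hc]
      ring
    · obtain ⟨p, r, hr⟩ := ih
      have hXl : (X - C l) ∣ p ^ 2 - X :=
        dvd_trans (dvd_pow_self _ he.ne') ⟨r, hr⟩
      have hpl : p.eval l ^ 2 = l := by
        obtain ⟨s, hs⟩ := hXl
        have := congrArg (eval l) hs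
        simp at this
        linear_combination this
      have hpl0 : p.eval l ≠ 0 := by
        intro h
        rw [h] at hpl
        exact hl (by rw [← hpl]; ring)
      set c : ℂ := -(r.eval l) / (2 * p.eval l) with hcdef
      set g : Polynomial ℂ := r + 2 * C c * p + C c ^ 2 * (X - C l) ^ e with hgdef
      have hge : g.eval l = 0 := by
        have hXle : ((X - C l) ^ e).eval l = 0 := by
          simp [zero_pow he.ne']
        simp only [hgdef, eval_add, eval_mul, eval_pow, eval_ofNat, eval_C, hXle, mul_zero]
        rw [hcdef]
        field_simp
        ring
      obtain ⟨g', hg'⟩ := (dvd_iff_isRoot).mpr hge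
      refine ⟨p + C c * (X - C l) ^ e, g', ?_⟩
      have expand : (p + C c * (X - C l) ^ e) ^ 2 - X
          = (p ^ 2 - X) + (X - C l) ^ e * (2 * C c * p + C c ^ 2 * (X - C l) ^ e) := by
        ring
      rw [expand, hr, ← mul_add]
      have : r + (2 * C c * p + C c ^ 2 * (X - C l) ^ e) = g := by rw [hgdef]; ring
      rw [this, hg', pow_succ]
      ring

/-- Square root of `X` modulo a product of powers of distinct linear factors with
nonzero roots. -/
private lemma sqrt_mod_prod (s : Finset ℂ) (hs : ∀ l ∈ s, l ≠ 0) (e : ℂ → ℕ) :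
    ∃ p : Polynomial ℂ, (∏ l ∈ s, (X - C l) ^ e l) ∣ p ^ 2 - X := by
  classical
  induction s using Finset.induction_on with
  | empty => exact ⟨0, by simp⟩
  | @insert a s ha ih =>
    obtain ⟨p₁, hp₁⟩ := sqrt_mod_pow a (hs a (Finset.mem_insert_self a s)) (e a)
    obtain ⟨p₂, hp₂⟩ := ih fun l hl => hs l (Finset.mem_insert_of_mem hl)
    set q₁ : Polynomial ℂ := (X - C a) ^ e a with hq₁
    set q₂ : Polynomial ℂ := ∏ l ∈ s, (X - C l) ^ e l with hq₂
    have hco : IsCoprime q₁ q₂ := by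
      apply IsCoprime.pow_left
      apply IsCoprime.prod_right
      intro l hl
      apply IsCoprime.pow_right
      have hal : a - l ≠ 0 := sub_ne_zero.mpr (fun h => ha (h ▸ hl))
      refine ⟨-C (a - l)⁻¹, C (a - l)⁻¹, ?_⟩
      have h1 : -C (a - l)⁻¹ * (X - C a) + C (a - l)⁻¹ * (X - C l)
          = C (a - l)⁻¹ * (C a - C l) := by ring
      rw [h1, ← C_sub, ← C_mul, inv_mul_cancel₀ hal, C_1]
    obtain ⟨u, v, huv⟩ := id hco
    refine ⟨p₁ * (v * q₂) + p₂ * (u * q₁), ?_⟩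
    rw [Finset.prod_insert ha]
    refine hco.mul_dvd ?_ ?_
    · have hrw : p₁ * (v * q₂) + p₂ * (u * q₁) = p₁ + (p₂ - p₁) * u * q₁ := by
        have hv : v * q₂ = 1 - u * q₁ := by linear_combination huv
        rw [hv]; ring
      rw [hrw]
      have expand : (p₁ + (p₂ - p₁) * u * q₁) ^ 2 - X
          = (p₁ ^ 2 - X) + q₁ * (2 * p₁ * ((p₂ - p₁) * u)
              + ((p₂ - p₁) * u) ^ 2 * q₁) := by ring
      rw [expand]
      exact dvd_add hp₁ (Dvd.intro _ rfl)
    · have hrw : p₁ * (v * q₂) + p₂ * (u * q₁) = p₂ + (p₁ - p₂) * v * q₂ := by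
        have hu : u * q₁ = 1 - v * q₂ := by linear_combination huv
        rw [hu]; ring
      rw [hrw]
      have expand : (p₂ + (p₁ - p₂) * v * q₂) ^ 2 - X
          = (p₂ ^ 2 - X) + q₂ * (2 * p₂ * ((p₁ - p₂) * v)
              + ((p₁ - p₂) * v) ^ 2 * q₂) := by ring
      rw [expand]
      exact dvd_add hp₂ (Dvd.intro _ rfl)

/-- Every invertible complex matrix has a square root that is a polynomial in it. -/
private lemma exists_sqrt_poly {n : ℕ} (R : Matrix (Fin n) (Fin n) ℂ) (hR : IsUnit R) :
    ∃ p : Polynomial ℂ, (aeval R p) * (aeval R p) = R := by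
  classical
  set q : Polynomial ℂ := R.charpoly with hqdef
  have hmonic : q.Monic := R.charpoly_monic
  have hsplit : Splits q := IsAlgClosed.splits q
  have hq : q = ∏ l ∈ q.roots.toFinset, (X - C l) ^ q.rootMultiplicity l := by
    conv_lhs => rw [hsplit.eq_prod_roots_of_monic hmonic]
    rw [prod_multiset_root_eq_finset_root]
  have hdet : IsUnit R.det := (Matrix.isUnit_iff_isUnit_det R).mp hR
  have hroots : ∀ l ∈ q.roots.toFinset, l ≠ 0 := by
    intro l hl hl0
    subst hl0
    have hroot : q.IsRoot 0 := isRoot_of_mem_roots (Multiset.mem_toFinset.mp hl)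
    have hc0 : q.coeff 0 = 0 := by rwa [coeff_zero_eq_eval_zero]
    have := Matrix.det_eq_sign_charpoly_coeff R
    rw [← hqdef, hc0, mul_zero] at this
    rw [this] at hdet
    exact hdet.ne_zero rfl
  obtain ⟨p, s, hs⟩ := sqrt_mod_prod q.roots.toFinset hroots (fun l => q.rootMultiplicity l)
  refine ⟨p, ?_⟩
  have := congrArg (aeval R) hs
  rw [← hq] at this
  simp only [_root_.map_sub, _root_.map_mul, map_pow, aeval_X] at this
  rw [hqdef, Matrix.aeval_self_charpoly, zero_mul] at this
  have h2 : (aeval R p) ^ 2 = R := sub_eq_zero.mp this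
  rw [← pow_two]
  exact h2

/-- If `R * A = A * Rᵀ` then the same holds for any polynomial in `R`. -/
private lemma twist {n : ℕ} (R A : Matrix (Fin n) (Fin n) ℂ)
    (h : R * A = A * Rᵀ) (p : Polynomial ℂ) :
    (aeval R p) * A = A * (aeval R p)ᵀ := by
  have hpow : ∀ k : ℕ, R ^ k * A = A * Rᵀ ^ k := by
    intro k
    induction k with
    | zero => simp
    | succ k ih =>
      rw [pow_succ, pow_succ, mul_assoc, h, ← mul_assoc, ih, mul_assoc]
  induction p using Polynomial.induction_on' with
  | add p q hp hq => rw [map_add, transpose_add, add_mul, mul_add, hp, hq]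
  | monomial k c =>
    simp only [aeval_monomial, Algebra.algebraMap_eq_smul_one, smul_mul_assoc, one_mul,
      transpose_smul, Matrix.transpose_pow, mul_smul_comm]
    rw [hpow k]

/-- Two strictly equivalent pencils of skew-symmetric complex
matrices are congruent. -/
theorem stmt_0 (n : ℕ) (hn : 1 ≤ n) (A B A₁ B₁ : Matrix (Fin n) (Fin n) ℂ)
    (hA : Aᵀ = -A) (hB : Bᵀ = -B) (hA₁ : A₁ᵀ = -A₁) (hB₁ : B₁ᵀ = -B₁)
    (P Q : Matrix (Fin n) (Fin n) ℂ) (hP : IsUnit P) (hQ : IsUnit Q)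
    (hPA : P * A * Q = A₁) (hPB : P * B * Q = B₁) :
    ∃ S : Matrix (Fin n) (Fin n) ℂ, IsUnit S ∧ S * A * Sᵀ = A₁ ∧ S * B * Sᵀ = B₁ := by
  classical
  have hQT : IsUnit Qᵀ := (Matrix.isUnit_iff_isUnit_det _).mpr
    (by rw [Matrix.det_transpose]; exact (Matrix.isUnit_iff_isUnit_det Q).mp hQ)
  have hQTd : IsUnit Qᵀ.det := (Matrix.isUnit_iff_isUnit_det _).mp hQT
  have hQd : IsUnit Q.det := (Matrix.isUnit_iff_isUnit_det Q).mp hQ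
  have hQTinv : Qᵀ⁻¹ * Qᵀ = 1 := Matrix.nonsing_inv_mul _ hQTd
  have hQinv : Q * Q⁻¹ = 1 := Matrix.mul_nonsing_inv _ hQd
  have hQinv' : Q⁻¹ * Q = 1 := Matrix.nonsing_inv_mul _ hQd
  set R : Matrix (Fin n) (Fin n) ℂ := Qᵀ⁻¹ * P with hRdef
  have hRT : Rᵀ = Pᵀ * Q⁻¹ := by
    rw [hRdef, Matrix.transpose_mul, Matrix.transpose_nonsing_inv, Matrix.transpose_transpose]
  -- the key identity: Qᵀ * M * Pᵀ = M₁ for skew-symmetric pencils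
  have key : ∀ M M₁ : Matrix (Fin n) (Fin n) ℂ, Mᵀ = -M → M₁ᵀ = -M₁ →
      P * M * Q = M₁ → Qᵀ * M * Pᵀ = M₁ := by
    intro M M₁ hM hM₁ h
    have ht := congrArg Matrix.transpose h
    rw [Matrix.transpose_mul, Matrix.transpose_mul, hM, hM₁] at ht
    calc Qᵀ * M * Pᵀ = -(Qᵀ * (-M * Pᵀ)) := by
            rw [Matrix.neg_mul, Matrix.mul_neg, neg_neg, Matrix.mul_assoc]
      _ = -(-M₁) := by rw [ht]
      _ = M₁ := neg_neg _
  have keyA := key A A₁ hA hA₁ hPA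
  have keyB := key B B₁ hB hB₁ hPB
  -- R intertwines A and B with their transposed versions
  have hint : ∀ M M₁ : Matrix (Fin n) (Fin n) ℂ, P * M * Q = M₁ → Qᵀ * M * Pᵀ = M₁ →
      R * M = M * Rᵀ := by
    intro M M₁ h1 h2
    have : Qᵀ⁻¹ * (Qᵀ * M * Pᵀ) * Q⁻¹ = Qᵀ⁻¹ * (P * M * Q) * Q⁻¹ := by rw [h1, h2]
    rw [hRT, hRdef]
    calc Qᵀ⁻¹ * P * M = Qᵀ⁻¹ * (P * M * Q) * Q⁻¹ := by
          rw [show Qᵀ⁻¹ * (P * M * Q) * Q⁻¹ = Qᵀ⁻¹ * (P * M) * (Q * Q⁻¹) by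
            simp [Matrix.mul_assoc]]
          rw [hQinv, Matrix.mul_one, Matrix.mul_assoc]
      _ = Qᵀ⁻¹ * (Qᵀ * M * Pᵀ) * Q⁻¹ := by rw [this]
      _ = M * (Pᵀ * Q⁻¹) := by
          rw [show Qᵀ⁻¹ * (Qᵀ * M * Pᵀ) * Q⁻¹ = (Qᵀ⁻¹ * Qᵀ) * (M * (Pᵀ * Q⁻¹)) by
            simp [Matrix.mul_assoc]]
          rw [hQTinv, Matrix.one_mul]
  have hRA : R * A = A * Rᵀ := hint A A₁ hPA keyA
  have hRB : R * B = B * Rᵀ := hint B B₁ hPB keyB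
  have hRunit : IsUnit R := by
    refine (Matrix.isUnit_nonsing_inv_iff.mpr hQT).mul hP
  obtain ⟨p, hp⟩ := exists_sqrt_poly R hRunit
  set W : Matrix (Fin n) (Fin n) ℂ := aeval R p with hWdef
  have hWA : W * A = A * Wᵀ := twist R A hRA p
  have hWB : W * B = B * Wᵀ := twist R B hRB p
  have hWunit : IsUnit W := by
    rw [Matrix.isUnit_iff_isUnit_det]
    have : W.det * W.det = R.det := by rw [← Matrix.det_mul, hp]
    have hRd : IsUnit R.det := (Matrix.isUnit_iff_isUnit_det R).mp hRunit
    rw [isUnit_iff_ne_zero]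
    intro h0
    rw [h0, mul_zero] at this
    exact hRd.ne_zero this.symm
  refine ⟨Qᵀ * W, hQT.mul hWunit, ?_, ?_⟩
  · have hWW : W * A * Wᵀ = A * Rᵀ := by
      rw [hWA, Matrix.mul_assoc, ← Matrix.transpose_mul, hp]
    calc Qᵀ * W * A * (Qᵀ * W)ᵀ = Qᵀ * (W * A * Wᵀ) * Q := by
          rw [Matrix.transpose_mul, Matrix.transpose_transpose]
          simp [Matrix.mul_assoc]
      _ = Qᵀ * (A * (Pᵀ * Q⁻¹)) * Q := by rw [hWW, hRT]
      _ = Qᵀ * A * Pᵀ * (Q⁻¹ * Q) := by simp [Matrix.mul_assoc]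
      _ = A₁ := by rw [hQinv', Matrix.mul_one, keyA]
  · have hWW : W * B * Wᵀ = B * Rᵀ := by
      rw [hWB, Matrix.mul_assoc, ← Matrix.transpose_mul, hp]
    calc Qᵀ * W * B * (Qᵀ * W)ᵀ = Qᵀ * (W * B * Wᵀ) * Q := by
          rw [Matrix.transpose_mul, Matrix.transpose_transpose]
          simp [Matrix.mul_assoc]
      _ = Qᵀ * (B * (Pᵀ * Q⁻¹)) * Q := by rw [hWW, hRT]
      _ = Qᵀ * B * Pᵀ * (Q⁻¹ * Q) := by simp [Matrix.mul_assoc]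
      _ = B₁ := by rw [hQinv', Matrix.mul_one, keyB]
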